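/- Let X and Y be Lipschitz quaternions (elements of Quaternion ℤ) with Y ≠ 0 and normSq Y odd. Then there exists Q ∈ Quaternion ℤ such that normSq (X − Y * Q) < normSq Y. -/

import Mathlib

/-- For odd positive `N`, every integer is within `(N-1)/2` of a multiple of `N`. -/
lemma int_approx_odd (N a : ℤ) (hodd : Odd N) (hpos : 0 < N) :
    ∃ q : ℤ, 4 * (a - N * q) ^ 2 ≤ (N - 1) ^ 2 := by
  obtain ⟨m, hm⟩ := hodd
  have h0 : 0 ≤ a % N := Int.emod_nonneg a hpos.ne'
  have h1 : a % N < N := Int.emod_lt_of_pos a hpos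
  have hdiv : a = N * (a / N) + a % N := (Int.mul_ediv_add_emod a N).symm
  by_cases h : 2 * (a % N) ≤ N - 1
  · exact ⟨a / N, by nlinarith⟩
  · refine ⟨a / N + 1, ?_⟩
    have h2 : N + 1 ≤ 2 * (a % N) := by omega
    nlinarith

/-- One-sided division with remainder in the Lipschitz quaternions: if the divisor
has odd norm, a remainder of strictly smaller norm exists. -/
theorem lipschitz_quaternion_div_with_remainder (X Y : Quaternion ℤ) (hY : Y ≠ 0)
    (hodd : Odd (Quaternion.normSq Y)) :
    ∃ Q : Quaternion ℤ, Quaternion.normSq (X - Y * Q) < Quaternion.normSq Y := by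
  set N : ℤ := Quaternion.normSq Y with hN
  have hNpos : 0 < N := by
    rcases lt_or_eq_of_le (Quaternion.normSq_nonneg (a := Y)) with h | h
    · exact h
    · exact absurd (Quaternion.normSq_eq_zero.mp h.symm) hY
  set Z : Quaternion ℤ := star Y * X with hZ
  obtain ⟨q1, hq1⟩ := int_approx_odd N Z.re hodd hNpos
  obtain ⟨q2, hq2⟩ := int_approx_odd N Z.imI hodd hNpos
  obtain ⟨q3, hq3⟩ := int_approx_odd N Z.imJ hodd hNpos
  obtain ⟨q4, hq4⟩ := int_approx_odd N Z.imK hodd hNpos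
  refine ⟨⟨q1, q2, q3, q4⟩, ?_⟩
  set Q : Quaternion ℤ := ⟨q1, q2, q3, q4⟩ with hQ
  have key : star Y * (X - Y * Q) = Z - (N : Quaternion ℤ) * Q := by
    rw [mul_sub, ← mul_assoc, Quaternion.star_mul_self, hZ, hN]; rfl
  have hns : N * Quaternion.normSq (X - Y * Q) = Quaternion.normSq (Z - (N : Quaternion ℤ) * Q) := by
    rw [← key, map_mul, Quaternion.normSq_star, hN]
  have hcomp : Quaternion.normSq (Z - (N : Quaternion ℤ) * Q) =
      (Z.re - N * q1) ^ 2 + (Z.imI - N * q2) ^ 2 + (Z.imJ - N * q3) ^ 2 + (Z.imK - N * q4) ^ 2 := by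
    rw [Quaternion.normSq_def']
    simp [Quaternion.re_mul, Quaternion.imI_mul, Quaternion.imJ_mul, Quaternion.imK_mul]
    simp [hQ]
  have hbound : Quaternion.normSq (Z - (N : Quaternion ℤ) * Q) < N * N := by
    rw [hcomp]; nlinarith
  rw [← hns] at hbound
  exact lt_of_mul_lt_mul_left hbound hNpos.le
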